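/- Let M > 0 and k, p ∈ ℝ⁴. Then q ↦ 1/((‖q‖²+M²)(‖q-k‖²+M²)(‖q+p‖²+M²)) is Lebesgue integrable on ℝ⁴ and ∫_{ℝ⁴} dq / ((‖q‖²+M²)(‖q-k‖²+M²)(‖q+p‖²+M²)) = π² ∫_0^1 dβ₁ ∫_0^{1-β₁} dβ₂ of 1/(β₁β₂‖k‖² + β₁β₃‖p‖² + β₂β₃‖k+p‖² + M²) with β₃ = 1-β₁-β₂. -/

import Mathlib

open MeasureTheory Real Set Filter

noncomputable section FeynmanAux

local notation "ℝ4" => EuclideanSpace ℝ (Fin 4)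

namespace FeynmanAux

/-! ### Elementary positivity helpers -/

lemma lin_pos {u v s x : ℝ} (h0 : 0 ≤ s) (hsx : s ≤ x) (hu : 0 < u) (huv : 0 < u + x * v) :
    0 < u + s * v := by
  rcases le_or_gt 0 v with h | h
  · nlinarith
  · nlinarith

lemma convex_pos {a b t : ℝ} (ha : 0 < a) (hb : 0 < b) (h0 : 0 ≤ t) (h1 : t ≤ 1) :
    0 < t * a + (1 - t) * b := by
  rcases le_or_gt t (1/2) with h | h
  · nlinarith
  · nlinarith

lemma hasDerivAt_affine (u v s : ℝ) : HasDerivAt (fun s : ℝ => u + s * v) v s := by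
  simpa using ((hasDerivAt_id s).mul_const v).const_add u

/-! ### One-dimensional Feynman-parameter integrals -/

lemma integral_inv_cube_linear {u v x : ℝ} (hx : 0 ≤ x) (hu : 0 < u) (huv : 0 < u + x * v) :
    ∫ s in (0:ℝ)..x, ((u + s * v) ^ 3)⁻¹ = x * (2 * u + x * v) / (2 * u ^ 2 * (u + x * v) ^ 2) := by
  have hpos : ∀ s ∈ Set.uIcc (0:ℝ) x, 0 < u + s * v := by
    intro s hs
    rw [Set.uIcc_of_le hx] at hs
    exact lin_pos hs.1 hs.2 hu huv
  have hderiv : ∀ s ∈ Set.uIcc (0:ℝ) x,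
      HasDerivAt (fun s => s * (2 * u + s * v) / (2 * u ^ 2 * (u + s * v) ^ 2))
        (((u + s * v) ^ 3)⁻¹) s := by
    intro s hs
    have h1 : u + s * v ≠ 0 := (hpos s hs).ne'
    have hnum : HasDerivAt (fun s : ℝ => s * (2 * u + s * v)) (2 * u + 2 * s * v) s := by
      have ha : HasDerivAt (fun s : ℝ => 2 * u + s * v) v s := hasDerivAt_affine _ _ _
      have := (hasDerivAt_id s).fun_mul ha
      simp only [id_eq] at this
      refine this.congr_deriv ?_
      ring
    have hden : HasDerivAt (fun s : ℝ => 2 * u ^ 2 * (u + s * v) ^ 2)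
        (2 * u ^ 2 * (2 * (u + s * v) * v)) s := by
      have hb := (hasDerivAt_affine u v s).fun_pow 2
      have hb' : HasDerivAt (fun s : ℝ => (u + s * v) ^ 2) (2 * (u + s * v) * v) s := by
        refine hb.congr_deriv ?_
        norm_num
      exact hb'.const_mul _
    have hden_ne : 2 * u ^ 2 * (u + s * v) ^ 2 ≠ 0 := by positivity
    have := hnum.div hden hden_ne
    refine this.congr_deriv ?_
    field_simp
    ring
  rw [intervalIntegral.integral_eq_sub_of_hasDerivAt hderiv ?hint]
  · simp
  case hint =>
    apply ContinuousOn.intervalIntegrable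
    apply ContinuousOn.inv₀
    · fun_prop
    · intro s hs; exact (pow_pos (hpos s hs) 3).ne'

lemma integral_feynman_outer {A B C : ℝ} (hA : 0 < A) (hB : 0 < B) (hC : 0 < C) :
    ∫ t in (0:ℝ)..1, (1 - t) * ((t * A + (1 - t) * C) + (t * A + (1 - t) * B)) /
        ((t * A + (1 - t) * C) ^ 2 * (t * A + (1 - t) * B) ^ 2) = (A * B * C)⁻¹ := by
  have hP : ∀ t ∈ Set.uIcc (0:ℝ) 1, 0 < t * A + (1 - t) * C := by
    intro t ht; rw [Set.uIcc_of_le zero_le_one] at ht; exact convex_pos hA hC ht.1 ht.2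
  have hQ : ∀ t ∈ Set.uIcc (0:ℝ) 1, 0 < t * A + (1 - t) * B := by
    intro t ht; rw [Set.uIcc_of_le zero_le_one] at ht; exact convex_pos hA hB ht.1 ht.2
  have hderiv : ∀ t ∈ Set.uIcc (0:ℝ) 1,
      HasDerivAt (fun t => t * (B + C + (A - B - C) * t) /
          (B * C * (t * A + (1 - t) * C) * (t * A + (1 - t) * B)))
        ((1 - t) * ((t * A + (1 - t) * C) + (t * A + (1 - t) * B)) /
          ((t * A + (1 - t) * C) ^ 2 * (t * A + (1 - t) * B) ^ 2)) t := by
    intro t ht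
    have hPt := hP t ht
    have hQt := hQ t ht
    have hnum : HasDerivAt (fun t : ℝ => t * (B + C + (A - B - C) * t))
        (B + C + 2 * (A - B - C) * t) t := by
      have ha : HasDerivAt (fun t : ℝ => B + C + (A - B - C) * t) (A - B - C) t := by
        simpa [mul_comm] using hasDerivAt_affine (B + C) (A - B - C) t
      have := (hasDerivAt_id t).fun_mul ha
      simp only [id_eq] at this
      refine this.congr_deriv ?_
      ring
    have hden : HasDerivAt
        (fun t : ℝ => B * C * (t * A + (1 - t) * C) * (t * A + (1 - t) * B))
        (B * C * (A - C) * (t * A + (1 - t) * B) +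
          B * C * (t * A + (1 - t) * C) * (A - B)) t := by
      have hp : HasDerivAt (fun t : ℝ => t * A + (1 - t) * C) (A - C) t := by
        have h := hasDerivAt_affine C (A - C) t
        have heq : (fun s : ℝ => C + s * (A - C)) = fun s : ℝ => s * A + (1 - s) * C := by
          funext s; ring
        rwa [heq] at h
      have hq : HasDerivAt (fun t : ℝ => t * A + (1 - t) * B) (A - B) t := by
        have h := hasDerivAt_affine B (A - B) t
        have heq : (fun s : ℝ => B + s * (A - B)) = fun s : ℝ => s * A + (1 - s) * B := by
          funext s; ring
        rwa [heq] at h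
      have := ((hp.const_mul (B * C)).fun_mul hq)
      convert this using 1
    have hden_ne : B * C * (t * A + (1 - t) * C) * (t * A + (1 - t) * B) ≠ 0 := by positivity
    have := hnum.div hden hden_ne
    refine this.congr_deriv ?_
    field_simp
    ring
  rw [intervalIntegral.integral_eq_sub_of_hasDerivAt hderiv ?hint]
  · field_simp
    ring
  case hint =>
    apply ContinuousOn.intervalIntegrable
    apply ContinuousOn.div
    · fun_prop
    · fun_prop
    · intro t ht
      have := hP t ht; have := hQ t ht
      positivity

/-! ### The radial integral in dimension four -/

lemma radial_1d {Δ : ℝ} (hΔ : 0 < Δ) :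
    ∫ r in Ioi (0:ℝ), r ^ 3 * ((r ^ 2 + Δ) ^ 3)⁻¹ = (4 * Δ)⁻¹ := by
  set F : ℝ → ℝ := fun r => -(2 * (r ^ 2 + Δ))⁻¹ + Δ * (4 * (r ^ 2 + Δ) ^ 2)⁻¹ with hF
  have hderiv : ∀ r ∈ Ici (0:ℝ), HasDerivAt F (r ^ 3 * ((r ^ 2 + Δ) ^ 3)⁻¹) r := by
    intro r _
    have hb : HasDerivAt (fun r : ℝ => r ^ 2 + Δ) (2 * r) r := by
      simpa using (hasDerivAt_pow 2 r).add_const Δ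
    have h3 : (2:ℝ) * (r ^ 2 + Δ) ≠ 0 := by positivity
    have h4 : (4:ℝ) * (r ^ 2 + Δ) ^ 2 ≠ 0 := by positivity
    have h1 := ((hb.const_mul 2).inv h3).neg
    have hsq : HasDerivAt (fun r : ℝ => (r ^ 2 + Δ) ^ 2) (2 * (r ^ 2 + Δ) * (2 * r)) r := by
      have := hb.fun_pow 2
      refine this.congr_deriv ?_
      norm_num
    have h2 := ((hsq.const_mul 4).inv h4).const_mul Δ
    have := h1.add h2
    refine this.congr_deriv ?_
    field_simp
    ring
  have hpos : ∀ r ∈ Ioi (0:ℝ), 0 ≤ r ^ 3 * ((r ^ 2 + Δ) ^ 3)⁻¹ := by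
    intro r hr
    have : (0:ℝ) < r := hr
    positivity
  have htend : Tendsto F atTop (nhds 0) := by
    have h1 : Tendsto (fun r : ℝ => r ^ 2 + Δ) atTop atTop :=
      tendsto_atTop_add_const_right _ Δ (tendsto_pow_atTop two_ne_zero)
    have h2 : Tendsto (fun r : ℝ => 2 * (r ^ 2 + Δ)) atTop atTop :=
      h1.const_mul_atTop two_pos
    have h3 : Tendsto (fun r : ℝ => 4 * (r ^ 2 + Δ) ^ 2) atTop atTop := by
      have := ((tendsto_pow_atTop two_ne_zero).comp h1).const_mul_atTop four_pos
      simpa [Function.comp] using this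
    have h := (h2.inv_tendsto_atTop.neg).add (h3.inv_tendsto_atTop.const_mul Δ)
    rw [show -(0:ℝ) + Δ * 0 = 0 by ring] at h
    exact h
  rw [integral_Ioi_of_hasDerivAt_of_nonneg' hderiv hpos htend]
  have h0 : F 0 = -(4 * Δ)⁻¹ := by
    rw [hF]
    norm_num
    field_simp
    ring
  rw [h0]
  ring

lemma volume_ball4 : (volume (Metric.ball (0:ℝ4) 1)).toReal = π ^ 2 / 2 := by
  rw [EuclideanSpace.volume_ball]
  simp only [Fintype.card_fin]
  have h1 : ((4:ℕ) : ℝ) / 2 + 1 = ((2:ℕ) : ℝ) + 1 := by norm_num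
  rw [h1, Real.Gamma_nat_eq_factorial]
  have h2 : Real.sqrt π ^ 4 = π ^ 2 := by
    rw [show (4:ℕ) = 2 * 2 from rfl, pow_mul, Real.sq_sqrt pi_pos.le]
  rw [h2]
  simp [ENNReal.toReal_mul, ENNReal.toReal_ofReal (by positivity : (0:ℝ) ≤ π ^ 2 / 2)]

lemma integral_4d {Δ : ℝ} (hΔ : 0 < Δ) :
    ∫ q : ℝ4, ((‖q‖ ^ 2 + Δ) ^ 3)⁻¹ = π ^ 2 / (2 * Δ) := by
  have h := MeasureTheory.integral_fun_norm_addHaar (volume : Measure ℝ4)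
      (fun r : ℝ => ((r ^ 2 + Δ) ^ 3)⁻¹)
  rw [h]
  have hdim : Module.finrank ℝ ℝ4 = 4 := by
    simp [finrank_euclideanSpace]
  rw [hdim, measureReal_def, volume_ball4]
  have : ∫ y in Ioi (0:ℝ), y ^ (4 - 1) • ((y ^ 2 + Δ) ^ 3)⁻¹ =
      ∫ y in Ioi (0:ℝ), y ^ 3 * ((y ^ 2 + Δ) ^ 3)⁻¹ := by
    norm_num [smul_eq_mul]
  rw [this, radial_1d hΔ]
  simp only [nsmul_eq_mul, smul_eq_mul]
  field_simp
  ring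

lemma integrable_4d {Δ : ℝ} (hΔ : 0 < Δ) :
    Integrable (fun q : ℝ4 => ((‖q‖ ^ 2 + Δ) ^ 3)⁻¹) := by
  set m : ℝ := min Δ 1 with hm
  have hm0 : 0 < m := lt_min hΔ one_pos
  have hg : Integrable (fun q : ℝ4 => (2 / m) ^ 3 * (1 + ‖q‖) ^ (-(6:ℝ))) := by
    apply Integrable.const_mul
    apply integrable_one_add_norm (E := ℝ4)
    rw [finrank_euclideanSpace]
    simp
    norm_num
  have hc : Continuous fun q : ℝ4 => ((‖q‖ ^ 2 + Δ) ^ 3)⁻¹ := by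
    apply Continuous.inv₀
    · fun_prop
    · intro q; positivity
  refine hg.mono' hc.aestronglyMeasurable (Filter.Eventually.of_forall fun q => ?_)
  have hq : (0:ℝ) ≤ ‖q‖ := norm_nonneg q
  have hA : (0:ℝ) < (‖q‖ ^ 2 + Δ) ^ 3 := by positivity
  have hrpow : (1 + ‖q‖) ^ (-(6:ℝ)) = ((1 + ‖q‖) ^ (6:ℕ))⁻¹ := by
    rw [Real.rpow_neg (by positivity), ← Real.rpow_natCast]
    norm_num
  rw [Real.norm_eq_abs, abs_of_nonneg (by positivity), hrpow]
  have h1 : m ≤ Δ := min_le_left _ _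
  have h2 : m ≤ 1 := min_le_right _ _
  have key : (1 + ‖q‖) ^ 2 ≤ (2 / m) * (‖q‖ ^ 2 + Δ) := by
    rw [div_mul_eq_mul_div, le_div_iff₀ hm0]
    nlinarith [sq_nonneg (1 - ‖q‖), sq_nonneg ‖q‖]
  have h6 : (1 + ‖q‖) ^ 6 ≤ (2 / m) ^ 3 * (‖q‖ ^ 2 + Δ) ^ 3 := by
    have := pow_le_pow_left₀ (by positivity) key 3
    rw [← pow_mul] at this
    norm_num at this
    rw [mul_pow] at this
    exact this
  have h7 : (1 + ‖q‖) ^ 6 * ((‖q‖ ^ 2 + Δ) ^ 3)⁻¹ ≤ (2 / m) ^ 3 := by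
    rw [mul_inv_le_iff₀ hA]
    linarith
  calc ((‖q‖ ^ 2 + Δ) ^ 3)⁻¹
      = ((1 + ‖q‖) ^ 6)⁻¹ * ((1 + ‖q‖) ^ 6 * ((‖q‖ ^ 2 + Δ) ^ 3)⁻¹) := by
        field_simp
    _ ≤ ((1 + ‖q‖) ^ 6)⁻¹ * (2 / m) ^ 3 :=
        mul_le_mul_of_nonneg_left h7 (by positivity)
    _ = (2 / m) ^ 3 * ((1 + ‖q‖) ^ 6)⁻¹ := mul_comm _ _

lemma integrable_shift {Δ : ℝ} (hΔ : 0 < Δ) (c : ℝ4) :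
    Integrable (fun q : ℝ4 => ((‖q - c‖ ^ 2 + Δ) ^ 3)⁻¹) :=
  (integrable_4d hΔ).comp_sub_right c

lemma integral_shift {Δ : ℝ} (hΔ : 0 < Δ) (c : ℝ4) :
    ∫ q : ℝ4, ((‖q - c‖ ^ 2 + Δ) ^ 3)⁻¹ = π ^ 2 / (2 * Δ) := by
  have h : ∫ q : ℝ4, ((‖q - c‖ ^ 2 + Δ) ^ 3)⁻¹ = ∫ q : ℝ4, ((‖q‖ ^ 2 + Δ) ^ 3)⁻¹ :=
    integral_sub_right_eq_self (fun q : ℝ4 => ((‖q‖ ^ 2 + Δ) ^ 3)⁻¹) c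
  rw [h, integral_4d hΔ]

/-! ### Completing the square -/

lemma complete_sq (M t s : ℝ) (k p q : ℝ4) :
    t * (‖q‖ ^ 2 + M ^ 2) + s * (‖q - k‖ ^ 2 + M ^ 2) + (1 - t - s) * (‖q + p‖ ^ 2 + M ^ 2) =
      ‖q - (s • k - (1 - t - s) • p)‖ ^ 2 +
        (t * s * ‖k‖ ^ 2 + t * (1 - t - s) * ‖p‖ ^ 2 + s * (1 - t - s) * ‖k + p‖ ^ 2 + M ^ 2) := by
  have e1 : ‖q - k‖ ^ 2 = ‖q‖ ^ 2 - 2 * inner ℝ q k + ‖k‖ ^ 2 := norm_sub_sq_real q k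
  have e2 : ‖q + p‖ ^ 2 = ‖q‖ ^ 2 + 2 * inner ℝ q p + ‖p‖ ^ 2 := norm_add_sq_real q p
  have e3 : ‖k + p‖ ^ 2 = ‖k‖ ^ 2 + 2 * inner ℝ k p + ‖p‖ ^ 2 := norm_add_sq_real k p
  have e4 : ‖q - (s • k - (1 - t - s) • p)‖ ^ 2 =
      ‖q‖ ^ 2 - 2 * (s * inner ℝ q k - (1 - t - s) * inner ℝ q p) +
        (s ^ 2 * ‖k‖ ^ 2 - 2 * (s * (1 - t - s)) * inner ℝ k p + (1 - t - s) ^ 2 * ‖p‖ ^ 2) := by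
    rw [norm_sub_sq_real, norm_sub_sq_real]
    simp only [inner_sub_right, real_inner_smul_left, real_inner_smul_right, norm_smul,
      mul_pow, sq_abs, Real.norm_eq_abs]
    ring
  rw [e1, e2, e3, e4]
  ring

/-! ### The simplex, the parametrized propagator, and the Feynman denominator -/

def simx : Set (ℝ × ℝ) := {b | 0 < b.1 ∧ 0 < b.2 ∧ b.1 + b.2 < 1}

lemma simx_meas : MeasurableSet simx := by
  have : simx = {b : ℝ × ℝ | 0 < b.1} ∩ ({b | 0 < b.2} ∩ {b | b.1 + b.2 < 1}) := rfl
  rw [this]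
  exact (measurableSet_lt measurable_const measurable_fst).inter
    ((measurableSet_lt measurable_const measurable_snd).inter
      (measurableSet_lt (measurable_fst.add measurable_snd) measurable_const))

def Dq (M : ℝ) (k p q : ℝ4) (t s : ℝ) : ℝ :=
  t * (‖q‖ ^ 2 + M ^ 2) + s * (‖q - k‖ ^ 2 + M ^ 2) + (1 - t - s) * (‖q + p‖ ^ 2 + M ^ 2)

def Dlt (M : ℝ) (k p : ℝ4) (t s : ℝ) : ℝ :=
  t * s * ‖k‖ ^ 2 + t * (1 - t - s) * ‖p‖ ^ 2 + s * (1 - t - s) * ‖k + p‖ ^ 2 + M ^ 2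

def gfun (M : ℝ) (k p : ℝ4) (q : ℝ4) (b : ℝ × ℝ) : ℝ :=
  simx.indicator (fun b => 2 * ((Dq M k p q b.1 b.2) ^ 3)⁻¹) b

def psi (M : ℝ) (k p : ℝ4) (b : ℝ × ℝ) : ℝ :=
  simx.indicator (fun b => π ^ 2 * (Dlt M k p b.1 b.2)⁻¹) b

lemma Dlt_pos {M : ℝ} (hM : 0 < M) {k p : ℝ4} {b : ℝ × ℝ} (hb : b ∈ simx) :
    0 < Dlt M k p b.1 b.2 := by
  obtain ⟨ht, hs, hsum⟩ := hb
  have hu : (0:ℝ) < 1 - b.1 - b.2 := by linarith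
  have h1 : 0 ≤ b.1 * b.2 * ‖k‖ ^ 2 := by positivity
  have h2 : 0 ≤ b.1 * (1 - b.1 - b.2) * ‖p‖ ^ 2 := by positivity
  have h3 : 0 ≤ b.2 * (1 - b.1 - b.2) * ‖k + p‖ ^ 2 := by positivity
  have h4 : 0 < M ^ 2 := by positivity
  unfold Dlt
  linarith

lemma Dlt_ge {M : ℝ} (hM : 0 < M) {k p : ℝ4} {b : ℝ × ℝ} (hb : b ∈ simx) :
    M ^ 2 ≤ Dlt M k p b.1 b.2 := by
  obtain ⟨ht, hs, hsum⟩ := hb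
  have hu : (0:ℝ) < 1 - b.1 - b.2 := by linarith
  have h1 : 0 ≤ b.1 * b.2 * ‖k‖ ^ 2 := by positivity
  have h2 : 0 ≤ b.1 * (1 - b.1 - b.2) * ‖p‖ ^ 2 := by positivity
  have h3 : 0 ≤ b.2 * (1 - b.1 - b.2) * ‖k + p‖ ^ 2 := by positivity
  unfold Dlt
  linarith

lemma gfun_measurable (M : ℝ) (k p : ℝ4) :
    Measurable (fun z : ℝ4 × ℝ × ℝ => gfun M k p z.1 z.2) := by
  have hEq : (fun z : ℝ4 × ℝ × ℝ => gfun M k p z.1 z.2) =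
      Set.indicator {z : ℝ4 × ℝ × ℝ | z.2 ∈ simx}
        (fun z => 2 * ((Dq M k p z.1 z.2.1 z.2.2) ^ 3)⁻¹) := by
    funext z
    simp only [gfun]
    by_cases h : z.2 ∈ simx
    · rw [Set.indicator_of_mem h,
        Set.indicator_of_mem (show z ∈ {z : ℝ4 × ℝ × ℝ | z.2 ∈ simx} from h)]
    · rw [Set.indicator_of_notMem h,
        Set.indicator_of_notMem (show z ∉ {z : ℝ4 × ℝ × ℝ | z.2 ∈ simx} from h)]
  rw [hEq]
  have hcont : Continuous (fun z : ℝ4 × ℝ × ℝ => Dq M k p z.1 z.2.1 z.2.2) := by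
    unfold Dq
    fun_prop
  exact (measurable_const.mul ((hcont.measurable.pow_const 3).inv)).indicator
    (measurable_snd simx_meas)

lemma psi_measurable (M : ℝ) (k p : ℝ4) : Measurable (psi M k p) := by
  have hcont : Continuous (fun b : ℝ × ℝ => Dlt M k p b.1 b.2) := by
    unfold Dlt
    fun_prop
  exact (measurable_const.mul hcont.measurable.inv).indicator simx_meas

lemma psi_nonneg {M : ℝ} (hM : 0 < M) (k p : ℝ4) (b : ℝ × ℝ) : 0 ≤ psi M k p b := by
  unfold psi
  apply Set.indicator_nonneg
  intro b hb
  have := Dlt_pos hM (k := k) (p := p) hb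
  positivity

lemma gfun_nonneg {M : ℝ} (hM : 0 < M) (k p q : ℝ4) (b : ℝ × ℝ) : 0 ≤ gfun M k p q b := by
  unfold gfun
  apply Set.indicator_nonneg
  intro b hb
  obtain ⟨ht, hs, hsum⟩ := hb
  have hu : (0:ℝ) < 1 - b.1 - b.2 := by linarith
  have hA : (0:ℝ) < ‖q‖ ^ 2 + M ^ 2 := by positivity
  have hB : (0:ℝ) < ‖q - k‖ ^ 2 + M ^ 2 := by positivity
  have hC : (0:ℝ) < ‖q + p‖ ^ 2 + M ^ 2 := by positivity
  have hD : 0 < Dq M k p q b.1 b.2 := by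
    unfold Dq
    have := mul_pos ht hA
    have := mul_pos hs hB
    have := mul_pos hu hC
    linarith
  positivity

lemma indicator_integrable_Ioo {f : ℝ → ℝ} {a b : ℝ} (hab : a ≤ b)
    (h : IntervalIntegrable f volume a b) : Integrable ((Ioo a b).indicator f) := by
  rw [integrable_indicator_iff measurableSet_Ioo]
  have h1 : IntegrableOn f (Ioc a b) := (intervalIntegrable_iff_integrableOn_Ioc_of_le hab).mp h
  exact h1.mono_set Ioo_subset_Ioc_self

lemma key2 {M : ℝ} (hM : 0 < M) (k p : ℝ4) (b : ℝ × ℝ) :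
    ∫⁻ q : ℝ4, ENNReal.ofReal (gfun M k p q b) = ENNReal.ofReal (psi M k p b) := by
  by_cases hb : b ∈ simx
  · have hD := Dlt_pos hM (k := k) (p := p) hb
    have hcs : ∀ q : ℝ4, Dq M k p q b.1 b.2 =
        ‖q - (b.2 • k - (1 - b.1 - b.2) • p)‖ ^ 2 + Dlt M k p b.1 b.2 := fun q =>
      complete_sq M b.1 b.2 k p q
    have hg : ∀ q : ℝ4, gfun M k p q b =
        2 * ((‖q - (b.2 • k - (1 - b.1 - b.2) • p)‖ ^ 2 + Dlt M k p b.1 b.2) ^ 3)⁻¹ := by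
      intro q
      simp only [gfun, Set.indicator_of_mem hb]
      rw [hcs q]
    simp_rw [hg]
    have hint : Integrable (fun q : ℝ4 =>
        2 * ((‖q - (b.2 • k - (1 - b.1 - b.2) • p)‖ ^ 2 + Dlt M k p b.1 b.2) ^ 3)⁻¹) :=
      (integrable_shift hD _).const_mul 2
    have hnn : 0 ≤ᵐ[volume] fun q : ℝ4 =>
        2 * ((‖q - (b.2 • k - (1 - b.1 - b.2) • p)‖ ^ 2 + Dlt M k p b.1 b.2) ^ 3)⁻¹ :=
      Filter.Eventually.of_forall fun q => by positivity
    rw [← ofReal_integral_eq_lintegral_ofReal hint hnn]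
    rw [MeasureTheory.integral_const_mul, integral_shift hD]
    simp only [psi, Set.indicator_of_mem hb]
    congr 1
    field_simp
  · have hg : ∀ q : ℝ4, gfun M k p q b = 0 := fun q => by
      simp [gfun, Set.indicator_of_notMem hb]
    simp_rw [hg]
    simp [psi, Set.indicator_of_notMem hb]

lemma key1 {M : ℝ} (hM : 0 < M) (k p q : ℝ4) :
    ∫⁻ b : ℝ × ℝ, ENNReal.ofReal (gfun M k p q b) =
      ENNReal.ofReal
        (((‖q‖ ^ 2 + M ^ 2) * (‖q - k‖ ^ 2 + M ^ 2) * (‖q + p‖ ^ 2 + M ^ 2))⁻¹) := by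
  set A := ‖q‖ ^ 2 + M ^ 2 with hA'
  set B := ‖q - k‖ ^ 2 + M ^ 2 with hB'
  set C := ‖q + p‖ ^ 2 + M ^ 2 with hC'
  have hA : 0 < A := by rw [hA']; positivity
  have hB : 0 < B := by rw [hB']; positivity
  have hC : 0 < C := by rw [hC']; positivity
  have hbmeas : Measurable fun b : ℝ × ℝ => ENNReal.ofReal (gfun M k p q b) :=
    ((gfun_measurable M k p).comp measurable_prodMk_left).ennreal_ofReal
  rw [Measure.volume_eq_prod, MeasureTheory.lintegral_prod _ hbmeas.aemeasurable]
  have hinner : ∀ t : ℝ, (∫⁻ s : ℝ, ENNReal.ofReal (gfun M k p q (t, s))) =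
      ENNReal.ofReal ((Ioo (0:ℝ) 1).indicator
        (fun t => (1 - t) * ((t * A + (1 - t) * C) + (t * A + (1 - t) * B)) /
          ((t * A + (1 - t) * C) ^ 2 * (t * A + (1 - t) * B) ^ 2)) t) := by
    intro t
    by_cases ht : t ∈ Ioo (0:ℝ) 1
    · have ht0 : (0:ℝ) < t := ht.1
      have ht1 : t < 1 := ht.2
      have hx : (0:ℝ) ≤ 1 - t := by linarith
      have hu : 0 < t * A + (1 - t) * C := convex_pos hA hC ht0.le ht1.le
      have hQ : 0 < t * A + (1 - t) * B := convex_pos hA hB ht0.le ht1.le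
      have huv : 0 < (t * A + (1 - t) * C) + (1 - t) * (B - C) := by
        have e : (t * A + (1 - t) * C) + (1 - t) * (B - C) = t * A + (1 - t) * B := by ring
        rw [e]; exact hQ
      have hgt : ∀ s : ℝ, gfun M k p q (t, s) =
          (Ioo (0:ℝ) (1 - t)).indicator
            (fun s => 2 * (((t * A + (1 - t) * C) + s * (B - C)) ^ 3)⁻¹) s := by
        intro s
        have hDlin : Dq M k p q t s = (t * A + (1 - t) * C) + s * (B - C) := by
          unfold Dq
          rw [hA', hB', hC']
          ring
        by_cases hs : s ∈ Ioo (0:ℝ) (1 - t)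
        · have hmem : (t, s) ∈ simx := ⟨ht0, hs.1, by show t + s < 1; linarith [hs.2]⟩
          simp only [gfun, Set.indicator_of_mem hmem, Set.indicator_of_mem hs]
          rw [hDlin]
        · have hnmem : (t, s) ∉ simx := by
            intro hmem
            exact hs ⟨hmem.2.1, by have h3 : t + s < 1 := hmem.2.2; linarith⟩
          simp [gfun, Set.indicator_of_notMem hnmem, Set.indicator_of_notMem hs]
      simp_rw [hgt]
      have hcOn : ContinuousOn (fun s : ℝ => 2 * (((t * A + (1 - t) * C) + s * (B - C)) ^ 3)⁻¹)
          (Set.uIcc 0 (1 - t)) := by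
        apply ContinuousOn.mul continuousOn_const
        apply ContinuousOn.inv₀
        · fun_prop
        · intro s hs
          rw [Set.uIcc_of_le hx] at hs
          exact (pow_pos (lin_pos hs.1 hs.2 hu huv) 3).ne'
      have hint := indicator_integrable_Ioo hx hcOn.intervalIntegrable
      have hnn : 0 ≤ᵐ[volume] (Ioo (0:ℝ) (1 - t)).indicator
          (fun s => 2 * (((t * A + (1 - t) * C) + s * (B - C)) ^ 3)⁻¹) := by
        refine Filter.Eventually.of_forall fun s => ?_
        apply Set.indicator_nonneg
        intro s hs
        have := lin_pos hs.1.le hs.2.le hu huv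
        positivity
      rw [← ofReal_integral_eq_lintegral_ofReal hint hnn]
      congr 1
      rw [MeasureTheory.integral_indicator measurableSet_Ioo, ← integral_Ioc_eq_integral_Ioo,
        ← intervalIntegral.integral_of_le hx]
      rw [intervalIntegral.integral_const_mul, integral_inv_cube_linear hx hu huv]
      simp only [Set.indicator_of_mem ht]
      have h1 := hu.ne'
      have h2 := hQ.ne'
      have e1 : (t * A + (1 - t) * C) + (1 - t) * (B - C) = t * A + (1 - t) * B := by ring
      have e2 : 2 * (t * A + (1 - t) * C) + (1 - t) * (B - C) =
          (t * A + (1 - t) * C) + (t * A + (1 - t) * B) := by ring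
      rw [e1, e2]
      field_simp
    · have hgt : ∀ s : ℝ, gfun M k p q (t, s) = 0 := by
        intro s
        have hnmem : (t, s) ∉ simx := by
          intro hmem
          apply ht
          refine ⟨hmem.1, ?_⟩
          have h2 : (0:ℝ) < s := hmem.2.1
          have h3 : t + s < 1 := hmem.2.2
          linarith
        simp [gfun, Set.indicator_of_notMem hnmem]
      simp_rw [hgt]
      rw [Set.indicator_of_notMem ht]
      simp
  simp_rw [hinner]
  have hWcont : ContinuousOn
      (fun t => (1 - t) * ((t * A + (1 - t) * C) + (t * A + (1 - t) * B)) /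
        ((t * A + (1 - t) * C) ^ 2 * (t * A + (1 - t) * B) ^ 2)) (Set.uIcc (0:ℝ) 1) := by
    apply ContinuousOn.div
    · fun_prop
    · fun_prop
    · intro t ht
      rw [Set.uIcc_of_le zero_le_one] at ht
      have h1 := convex_pos hA hC ht.1 ht.2
      have h2 := convex_pos hA hB ht.1 ht.2
      positivity
  have hint := indicator_integrable_Ioo zero_le_one hWcont.intervalIntegrable
  have hnn : 0 ≤ᵐ[volume] (Ioo (0:ℝ) 1).indicator
      (fun t => (1 - t) * ((t * A + (1 - t) * C) + (t * A + (1 - t) * B)) /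
        ((t * A + (1 - t) * C) ^ 2 * (t * A + (1 - t) * B) ^ 2)) := by
    refine Filter.Eventually.of_forall fun t => ?_
    apply Set.indicator_nonneg
    intro t ht
    have h1 := convex_pos hA hC ht.1.le ht.2.le
    have h2 := convex_pos hA hB ht.1.le ht.2.le
    have h3 : (0:ℝ) ≤ 1 - t := by linarith [ht.2]
    positivity
  rw [← ofReal_integral_eq_lintegral_ofReal hint hnn]
  congr 1
  rw [MeasureTheory.integral_indicator measurableSet_Ioo, ← integral_Ioc_eq_integral_Ioo,
    ← intervalIntegral.integral_of_le zero_le_one]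
  exact integral_feynman_outer hA hB hC

end FeynmanAux
end FeynmanAux


open FeynmanAux in
/-- Identity (int-q4): the three-propagator integral in Feynman parametrization. -/
theorem integral_three_propagators (M : ℝ) (hM : 0 < M)
    (k p : EuclideanSpace ℝ (Fin 4)) :
    Integrable (fun q : EuclideanSpace ℝ (Fin 4) =>
      1 / ((‖q‖ ^ 2 + M ^ 2) * (‖q - k‖ ^ 2 + M ^ 2) * (‖q + p‖ ^ 2 + M ^ 2))) ∧
    ∫ q : EuclideanSpace ℝ (Fin 4),
        1 / ((‖q‖ ^ 2 + M ^ 2) * (‖q - k‖ ^ 2 + M ^ 2) * (‖q + p‖ ^ 2 + M ^ 2)) =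
      π ^ 2 * ∫ β₁ in (0 : ℝ)..1, ∫ β₂ in (0 : ℝ)..(1 - β₁),
        1 / (β₁ * β₂ * ‖k‖ ^ 2 + β₁ * (1 - β₁ - β₂) * ‖p‖ ^ 2 +
          β₂ * (1 - β₁ - β₂) * ‖k + p‖ ^ 2 + M ^ 2) := by
  have hM2 : (0:ℝ) < M ^ 2 := by positivity
  simp only [one_div]
  have hcont : Continuous fun q : EuclideanSpace ℝ (Fin 4) =>
      ((‖q‖ ^ 2 + M ^ 2) * (‖q - k‖ ^ 2 + M ^ 2) * (‖q + p‖ ^ 2 + M ^ 2))⁻¹ := by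
    apply Continuous.inv₀
    · fun_prop
    · intro q
      positivity
  have hfnn : ∀ q : EuclideanSpace ℝ (Fin 4),
      0 ≤ ((‖q‖ ^ 2 + M ^ 2) * (‖q - k‖ ^ 2 + M ^ 2) * (‖q + p‖ ^ 2 + M ^ 2))⁻¹ := by
    intro q; positivity
  have hgm : Measurable (Function.uncurry fun (q : EuclideanSpace ℝ (Fin 4)) (b : ℝ × ℝ) =>
      ENNReal.ofReal (gfun M k p q b)) := (gfun_measurable M k p).ennreal_ofReal
  have hL : ∫⁻ q : EuclideanSpace ℝ (Fin 4), ENNReal.ofReal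
        (((‖q‖ ^ 2 + M ^ 2) * (‖q - k‖ ^ 2 + M ^ 2) * (‖q + p‖ ^ 2 + M ^ 2))⁻¹) =
      ∫⁻ b : ℝ × ℝ, ENNReal.ofReal (psi M k p b) :=
    calc ∫⁻ q : EuclideanSpace ℝ (Fin 4), ENNReal.ofReal
          (((‖q‖ ^ 2 + M ^ 2) * (‖q - k‖ ^ 2 + M ^ 2) * (‖q + p‖ ^ 2 + M ^ 2))⁻¹)
        = ∫⁻ q : EuclideanSpace ℝ (Fin 4), ∫⁻ b : ℝ × ℝ, ENNReal.ofReal (gfun M k p q b) :=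
          lintegral_congr fun q => (key1 hM k p q).symm
      _ = ∫⁻ b : ℝ × ℝ, ∫⁻ q : EuclideanSpace ℝ (Fin 4), ENNReal.ofReal (gfun M k p q b) :=
          lintegral_lintegral_swap hgm.aemeasurable
      _ = ∫⁻ b : ℝ × ℝ, ENNReal.ofReal (psi M k p b) :=
          lintegral_congr fun b => key2 hM k p b
  have hfin : ∫⁻ b : ℝ × ℝ, ENNReal.ofReal (psi M k p b) ≠ ⊤ := by
    have hle : ∀ b : ℝ × ℝ, ENNReal.ofReal (psi M k p b) ≤
        simx.indicator (fun _ => ENNReal.ofReal (π ^ 2 * (M ^ 2)⁻¹)) b := by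
      intro b
      by_cases hb : b ∈ simx
      · rw [Set.indicator_of_mem hb]
        simp only [psi, Set.indicator_of_mem hb]
        apply ENNReal.ofReal_le_ofReal
        have h2 := Dlt_ge hM (k := k) (p := p) hb
        have h3 : (Dlt M k p b.1 b.2)⁻¹ ≤ (M ^ 2)⁻¹ := by
          apply inv_anti₀ hM2 h2
        exact mul_le_mul_of_nonneg_left h3 (sq_nonneg π)
      · simp [psi, Set.indicator_of_notMem hb]
    have hbound : ∫⁻ b : ℝ × ℝ, ENNReal.ofReal (psi M k p b) ≤
        ∫⁻ b : ℝ × ℝ, simx.indicator (fun _ => ENNReal.ofReal (π ^ 2 * (M ^ 2)⁻¹)) b :=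
      lintegral_mono hle
    have hconst : ∫⁻ b : ℝ × ℝ, simx.indicator (fun _ => ENNReal.ofReal (π ^ 2 * (M ^ 2)⁻¹)) b =
        ENNReal.ofReal (π ^ 2 * (M ^ 2)⁻¹) * volume simx :=
      lintegral_indicator_const simx_meas _
    have hvol : volume simx ≤ 1 := by
      have hsub : simx ⊆ Set.Ioo (0:ℝ) 1 ×ˢ Set.Ioo (0:ℝ) 1 := by
        intro b hb
        obtain ⟨h1, h2, h3⟩ := hb
        exact ⟨⟨h1, by linarith⟩, ⟨h2, by linarith⟩⟩
      calc volume simx ≤ volume (Set.Ioo (0:ℝ) 1 ×ˢ Set.Ioo (0:ℝ) 1) := measure_mono hsub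
        _ = 1 := by
          rw [Measure.volume_eq_prod, Measure.prod_prod]
          simp [Real.volume_Ioo]
    refine ne_top_of_le_ne_top ?_ hbound
    rw [hconst]
    exact ENNReal.mul_ne_top ENNReal.ofReal_ne_top (ne_top_of_le_ne_top ENNReal.one_ne_top hvol)
  have hfin' : ∫⁻ q : EuclideanSpace ℝ (Fin 4), ENNReal.ofReal
      (((‖q‖ ^ 2 + M ^ 2) * (‖q - k‖ ^ 2 + M ^ 2) * (‖q + p‖ ^ 2 + M ^ 2))⁻¹) ≠ ⊤ := by
    rw [hL]; exact hfin
  have hInt : Integrable (fun q : EuclideanSpace ℝ (Fin 4) =>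
      ((‖q‖ ^ 2 + M ^ 2) * (‖q - k‖ ^ 2 + M ^ 2) * (‖q + p‖ ^ 2 + M ^ 2))⁻¹) := by
    refine ⟨hcont.aestronglyMeasurable, ?_⟩
    rw [hasFiniteIntegral_iff_ofReal (Filter.Eventually.of_forall hfnn)]
    exact lt_top_iff_ne_top.mpr hfin'
  refine ⟨hInt, ?_⟩
  rw [MeasureTheory.integral_eq_lintegral_of_nonneg_ae (Filter.Eventually.of_forall hfnn)
    hcont.aestronglyMeasurable]
  rw [hL]
  rw [← MeasureTheory.integral_eq_lintegral_of_nonneg_ae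
    (Filter.Eventually.of_forall (psi_nonneg hM k p)) (psi_measurable M k p).aestronglyMeasurable]
  have hψint : Integrable (psi M k p) (volume : Measure (ℝ × ℝ)) := by
    refine ⟨(psi_measurable M k p).aestronglyMeasurable, ?_⟩
    rw [hasFiniteIntegral_iff_ofReal (Filter.Eventually.of_forall (psi_nonneg hM k p))]
    exact lt_top_iff_ne_top.mpr hfin
  rw [Measure.volume_eq_prod] at hψint
  rw [Measure.volume_eq_prod, MeasureTheory.integral_prod _ hψint]
  have hinner : ∀ t : ℝ, (∫ s : ℝ, psi M k p (t, s)) =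
      (Set.Ioo (0:ℝ) 1).indicator
        (fun t => ∫ s in (0:ℝ)..(1 - t), π ^ 2 * (Dlt M k p t s)⁻¹) t := by
    intro t
    by_cases ht : t ∈ Set.Ioo (0:ℝ) 1
    · rw [Set.indicator_of_mem ht]
      have hps : ∀ s : ℝ, psi M k p (t, s) =
          (Set.Ioo (0:ℝ) (1 - t)).indicator (fun s => π ^ 2 * (Dlt M k p t s)⁻¹) s := by
        intro s
        by_cases hs : s ∈ Set.Ioo (0:ℝ) (1 - t)
        · have hmem : (t, s) ∈ simx := ⟨ht.1, hs.1, by show t + s < 1; linarith [hs.2]⟩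
          simp only [psi, Set.indicator_of_mem hmem, Set.indicator_of_mem hs]
        · have hnmem : (t, s) ∉ simx := by
            intro hmem
            exact hs ⟨hmem.2.1, by have h3 : t + s < 1 := hmem.2.2; linarith⟩
          simp [psi, Set.indicator_of_notMem hnmem, Set.indicator_of_notMem hs]
      simp_rw [hps]
      rw [MeasureTheory.integral_indicator measurableSet_Ioo, ← integral_Ioc_eq_integral_Ioo,
        ← intervalIntegral.integral_of_le (by linarith [ht.2] : (0:ℝ) ≤ 1 - t)]
    · rw [Set.indicator_of_notMem ht]
      have hps : ∀ s : ℝ, psi M k p (t, s) = 0 := by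
        intro s
        have hnmem : (t, s) ∉ simx := by
          intro hmem
          apply ht
          refine ⟨hmem.1, ?_⟩
          have h2 : (0:ℝ) < s := hmem.2.1
          have h3 : t + s < 1 := hmem.2.2
          linarith
        simp [psi, Set.indicator_of_notMem hnmem]
      simp [hps]
  simp_rw [hinner]
  rw [MeasureTheory.integral_indicator measurableSet_Ioo, ← integral_Ioc_eq_integral_Ioo,
    ← intervalIntegral.integral_of_le zero_le_one]
  simp_rw [intervalIntegral.integral_const_mul]
  simp only [Dlt]
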